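/- Let V be a random variable taking values in the non-negative integers, let k ≥ 1 be an integer and λ ≥ 0 an integer satisfying Σ_{u=0}^{k−1} P(V ∈ [k−u, k)) ≥ Σ_{u=0}^{λ} P(V ∈ [k, k+u)), and let U be a random variable uniformly distributed on the interval (−λ, k) and independent of V. Then P(V ≥ k) ≤ P(V + U ≥ k). -/

import Mathlib

open MeasureTheory ProbabilityTheory

/-- for a non-negative integer valued random variable `V` satisfying the
shape condition `Σ_{u=0}^{k-1} P(V ∈ [k-u, k)) ≥ Σ_{u=0}^{λ} P(V ∈ [k, k+u))`, and `U`
uniform on `(-λ, k)` independent of `V`, one has `P(V ≥ k) ≤ P(V + U ≥ k)`. -/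
theorem smoothing_increases_tail {Ω : Type*} [MeasurableSpace Ω]
    (μ : Measure Ω) [IsProbabilityMeasure μ]
    (V : Ω → ℕ) (hV : Measurable V) (U : Ω → ℝ) (hU : Measurable U)
    (k lam : ℕ) (hk : 1 ≤ k)
    (hunif : pdf.IsUniform U (Set.Ioo (-(lam : ℝ)) k) μ volume)
    (hindep : IndepFun V U μ)
    (hshape :
      ∑ u ∈ Finset.range (lam + 1),
          μ {ω | (k : ℝ) ≤ (V ω : ℝ) ∧ (V ω : ℝ) < (k : ℝ) + u}
        ≤ ∑ u ∈ Finset.range k,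
            μ {ω | (k : ℝ) - u ≤ (V ω : ℝ) ∧ (V ω : ℝ) < (k : ℝ)}) :
    μ {ω | k ≤ V ω} ≤ μ {ω | (k : ℝ) ≤ (V ω : ℝ) + U ω} := by
  classical
  set L := k + lam with hLdef
  have hL1 : 1 ≤ L := le_trans hk (Nat.le_add_right _ _)
  have hLne : (L : ENNReal) ≠ 0 := by
    simp only [ne_eq, Nat.cast_eq_zero]
    omega
  have hLnt : (L : ENNReal) ≠ ⊤ := ENNReal.natCast_ne_top L
  set p : ℕ → ENNReal := fun v => μ (V ⁻¹' {v}) with hp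
  -- volume of the support interval
  have hvol : volume (Set.Ioo (-(lam : ℝ)) k) = (L : ENNReal) := by
    rw [Real.volume_Ioo, show (k : ℝ) - (-(lam : ℝ)) = ((L : ℕ) : ℝ) by push_cast [hLdef]; ring,
      ENNReal.ofReal_natCast]
  have hvol0 : volume (Set.Ioo (-(lam : ℝ)) k) ≠ 0 := by rw [hvol]; exact hLne
  have hvolt : volume (Set.Ioo (-(lam : ℝ)) k) ≠ ⊤ := by rw [hvol]; exact hLnt
  -- uniform tail probabilities
  have hg : ∀ v : ℕ, μ (U ⁻¹' Set.Ici ((k : ℝ) - v)) = ((min v L : ℕ) : ENNReal) / L := by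
    intro v
    rw [hunif.measure_preimage hvol0 hvolt measurableSet_Ici, hvol]
    congr 1
    by_cases hvL : v < L
    · have h1 : -(lam : ℝ) < (k : ℝ) - v := by
        have : (v : ℝ) < (L : ℝ) := by exact_mod_cast hvL
        rw [hLdef] at this; push_cast at this ⊢; linarith
      have h2 : Set.Ioo (-(lam : ℝ)) (k : ℝ) ∩ Set.Ici ((k : ℝ) - v)
          = Set.Ico ((k : ℝ) - v) k := by
        ext x
        simp only [Set.mem_inter_iff, Set.mem_Ioo, Set.mem_Ici, Set.mem_Ico]
        constructor
        · rintro ⟨⟨_, hx2⟩, hx3⟩; exact ⟨hx3, hx2⟩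
        · rintro ⟨hx1, hx2⟩; exact ⟨⟨lt_of_lt_of_le h1 hx1, hx2⟩, hx1⟩
      rw [h2, Real.volume_Ico, show (k : ℝ) - ((k : ℝ) - v) = (v : ℝ) by ring,
        min_eq_left hvL.le, ENNReal.ofReal_natCast]
    · have hvL' : L ≤ v := le_of_not_gt hvL
      have h1 : (k : ℝ) - v ≤ -(lam : ℝ) := by
        have : (L : ℝ) ≤ (v : ℝ) := by exact_mod_cast hvL'
        rw [hLdef] at this; push_cast at this ⊢; linarith
      have h2 : Set.Ioo (-(lam : ℝ)) (k : ℝ) ∩ Set.Ici ((k : ℝ) - v)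
          = Set.Ioo (-(lam : ℝ)) (k : ℝ) := by
        apply Set.inter_eq_self_of_subset_left
        intro x hx
        exact le_trans h1 (le_of_lt hx.1)
      rw [h2, Real.volume_Ioo, min_eq_right hvL',
        show (k : ℝ) - (-(lam : ℝ)) = ((L : ℕ) : ℝ) by push_cast [hLdef]; ring,
        ENNReal.ofReal_natCast]
  -- decomposition over values of V
  have hdecomp : ∀ E : Set Ω, MeasurableSet E → μ E = ∑' v : ℕ, μ (V ⁻¹' {v} ∩ E) := by
    intro E hE
    have hcover : E = ⋃ v : ℕ, V ⁻¹' {v} ∩ E := by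
      ext ω
      simp only [Set.mem_iUnion, Set.mem_inter_iff, Set.mem_preimage, Set.mem_singleton_iff]
      exact ⟨fun h => ⟨V ω, rfl, h⟩, fun ⟨v, _, h⟩ => h⟩
    conv_lhs => rw [hcover]
    exact measure_iUnion
      (fun i j hij => Set.disjoint_left.mpr fun ω h1 h2 => hij (h1.1.symm.trans h2.1))
      (fun v => (hV (measurableSet_singleton v)).inter hE)
  -- the RHS
  have hmeasVR : Measurable fun ω => ((V ω : ℝ) + U ω) :=
    ((measurable_from_top (f := fun n : ℕ => (n : ℝ))).comp hV).add hU
  have hE : MeasurableSet {ω | (k : ℝ) ≤ (V ω : ℝ) + U ω} :=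
    measurableSet_le measurable_const hmeasVR
  have hRHS : μ {ω | (k : ℝ) ≤ (V ω : ℝ) + U ω}
      = ∑' v : ℕ, p v * (((min v L : ℕ) : ENNReal) / L) := by
    rw [hdecomp _ hE]
    refine tsum_congr fun v => ?_
    have hset : V ⁻¹' {v} ∩ {ω | (k : ℝ) ≤ (V ω : ℝ) + U ω}
        = V ⁻¹' {v} ∩ U ⁻¹' Set.Ici ((k : ℝ) - v) := by
      ext ω
      simp only [Set.mem_inter_iff, Set.mem_preimage, Set.mem_singleton_iff, Set.mem_setOf_eq,
        Set.mem_Ici]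
      constructor
      · rintro ⟨h1, h2⟩; subst h1; exact ⟨rfl, by linarith⟩
      · rintro ⟨h1, h2⟩; subst h1; exact ⟨rfl, by linarith⟩
    rw [hset, hindep.measure_inter_preimage_eq_mul _ _ (measurableSet_singleton v)
      measurableSet_Ici, hg v]
  -- the LHS
  have hE' : MeasurableSet {ω | k ≤ V ω} := hV measurableSet_Ici
  have hLHS : μ {ω | k ≤ V ω} = ∑' v : ℕ, (if k ≤ v then p v else 0) := by
    rw [hdecomp _ hE']
    refine tsum_congr fun v => ?_
    by_cases hv : k ≤ v
    · rw [if_pos hv]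
      congr 1
      apply Set.inter_eq_self_of_subset_left
      intro ω hω
      simp only [Set.mem_preimage, Set.mem_singleton_iff] at hω
      simp [Set.mem_setOf_eq, hω, hv]
    · rw [if_neg hv]
      have hempty : V ⁻¹' {v} ∩ {ω | k ≤ V ω} = ∅ := by
        ext ω
        simp only [Set.mem_inter_iff, Set.mem_preimage, Set.mem_singleton_iff, Set.mem_setOf_eq,
          Set.mem_empty_iff_false, iff_false, not_and]
        intro h1; rw [h1]; exact hv
      rw [hempty, measure_empty]
  -- measures of interval events as finite sums of atoms
  have hIco : ∀ a b : ℕ, μ {ω | (a : ℝ) ≤ (V ω : ℝ) ∧ (V ω : ℝ) < (b : ℝ)}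
      = ∑ v ∈ Finset.Ico a b, p v := by
    intro a b
    have hset : {ω | (a : ℝ) ≤ (V ω : ℝ) ∧ (V ω : ℝ) < (b : ℝ)}
        = ⋃ v ∈ Finset.Ico a b, V ⁻¹' {v} := by
      ext ω
      simp only [Set.mem_setOf_eq, Set.mem_iUnion, Set.mem_preimage, Set.mem_singleton_iff,
        Finset.mem_Ico, exists_prop]
      constructor
      · rintro ⟨h1, h2⟩
        exact ⟨V ω, ⟨by exact_mod_cast h1, by exact_mod_cast h2⟩, rfl⟩
      · rintro ⟨v, ⟨h1, h2⟩, h3⟩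
        rw [h3]
        exact ⟨by exact_mod_cast h1, by exact_mod_cast h2⟩
    rw [hset, measure_biUnion_finset]
    · intro i _ j _ hij
      exact Set.disjoint_left.mpr fun ω h1 h2 => hij (h1.symm.trans h2)
    · exact fun v _ => hV (measurableSet_singleton v)
  -- rewrite the shape hypothesis in terms of atoms
  have e1 : ∀ u : ℕ, μ {ω | (k : ℝ) ≤ (V ω : ℝ) ∧ (V ω : ℝ) < (k : ℝ) + u}
      = ∑ v ∈ Finset.Ico k (k + u), p v := by
    intro u
    rw [← hIco k (k + u)]
    congr 1
    ext ω
    simp only [Set.mem_setOf_eq]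
    push_cast
    tauto
  have e2 : ∀ u : ℕ, u < k → μ {ω | (k : ℝ) - u ≤ (V ω : ℝ) ∧ (V ω : ℝ) < (k : ℝ)}
      = ∑ v ∈ Finset.Ico (k - u) k, p v := by
    intro u hu
    rw [← hIco (k - u) k]
    congr 1
    ext ω
    simp only [Set.mem_setOf_eq]
    rw [Nat.cast_sub hu.le]
  have hshape2 : ∑ u ∈ Finset.range (lam + 1), ∑ v ∈ Finset.Ico k (k + u), p v
      ≤ ∑ u ∈ Finset.range k, ∑ v ∈ Finset.Ico (k - u) k, p v := by
    have hA : ∑ u ∈ Finset.range (lam + 1),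
        μ {ω | (k : ℝ) ≤ (V ω : ℝ) ∧ (V ω : ℝ) < (k : ℝ) + u}
        = ∑ u ∈ Finset.range (lam + 1), ∑ v ∈ Finset.Ico k (k + u), p v :=
      Finset.sum_congr rfl fun u _ => e1 u
    have hB : ∑ u ∈ Finset.range k,
        μ {ω | (k : ℝ) - u ≤ (V ω : ℝ) ∧ (V ω : ℝ) < (k : ℝ)}
        = ∑ u ∈ Finset.range k, ∑ v ∈ Finset.Ico (k - u) k, p v :=
      Finset.sum_congr rfl fun u hu => e2 u (Finset.mem_range.mp hu)
    rw [hA, hB] at hshape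
    exact hshape
  -- double-counting
  have hcount1 : ∑ u ∈ Finset.range (lam + 1), ∑ v ∈ Finset.Ico k (k + u), p v
      = ∑ v ∈ Finset.Ico k L, ((L - v : ℕ) : ENNReal) * p v := by
    have step1 : ∀ u ∈ Finset.range (lam + 1), ∑ v ∈ Finset.Ico k (k + u), p v
        = ∑ v ∈ Finset.Ico k L, if v < k + u then p v else 0 := by
      intro u hu
      simp only [Finset.mem_range] at hu
      rw [Finset.sum_ite, Finset.sum_const_zero, add_zero]
      apply Finset.sum_congr _ fun _ _ => rfl
      ext v
      simp only [Finset.mem_filter, Finset.mem_Ico]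
      omega
    rw [Finset.sum_congr rfl step1, Finset.sum_comm]
    refine Finset.sum_congr rfl fun v hv => ?_
    simp only [Finset.mem_Ico] at hv
    rw [Finset.sum_ite, Finset.sum_const, Finset.sum_const_zero, add_zero]
    have hfilt : (Finset.range (lam + 1)).filter (fun u => v < k + u)
        = Finset.Ico (v - k + 1) (lam + 1) := by
      ext a
      simp only [Finset.mem_filter, Finset.mem_range, Finset.mem_Ico]
      omega
    rw [hfilt, Nat.card_Ico, nsmul_eq_mul]
    congr 1
    simp only [hLdef] at hv ⊢
    congr 1
    omega
  have hcount2 : ∑ u ∈ Finset.range k, ∑ v ∈ Finset.Ico (k - u) k, p v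
      = ∑ v ∈ Finset.range k, (v : ENNReal) * p v := by
    have step1 : ∀ u ∈ Finset.range k, ∑ v ∈ Finset.Ico (k - u) k, p v
        = ∑ v ∈ Finset.range k, if k - u ≤ v then p v else 0 := by
      intro u hu
      simp only [Finset.mem_range] at hu
      rw [Finset.sum_ite, Finset.sum_const_zero, add_zero]
      apply Finset.sum_congr _ fun _ _ => rfl
      ext v
      simp only [Finset.mem_filter, Finset.mem_Ico, Finset.mem_range]
      omega
    rw [Finset.sum_congr rfl step1, Finset.sum_comm]
    refine Finset.sum_congr rfl fun v hv => ?_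
    simp only [Finset.mem_range] at hv
    rw [Finset.sum_ite, Finset.sum_const, Finset.sum_const_zero, add_zero]
    have hfilt : (Finset.range k).filter (fun u => k - u ≤ v) = Finset.Ico (k - v) k := by
      ext a
      simp only [Finset.mem_filter, Finset.mem_range, Finset.mem_Ico]
      omega
    rw [hfilt, Nat.card_Ico, nsmul_eq_mul]
    congr 2
    omega
  have key : ∑ v ∈ Finset.Ico k L, ((L - v : ℕ) : ENNReal) * p v
      ≤ ∑ v ∈ Finset.range k, (v : ENNReal) * p v := by
    rw [← hcount1, ← hcount2]; exact hshape2
  -- main finite inequality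
  have hfin : ∑ v ∈ Finset.range L, (if k ≤ v then p v else 0)
      ≤ ∑ v ∈ Finset.range L, p v * (((min v L : ℕ) : ENNReal) / L) := by
    have hlhs : ∑ v ∈ Finset.range L, (if k ≤ v then p v else 0)
        = ∑ v ∈ Finset.Ico k L, p v := by
      rw [Finset.sum_ite, Finset.sum_const_zero, add_zero]
      apply Finset.sum_congr _ fun _ _ => rfl
      ext v
      simp only [Finset.mem_filter, Finset.mem_range, Finset.mem_Ico]
      omega
    have hrhs : ∑ v ∈ Finset.range L, p v * (((min v L : ℕ) : ENNReal) / L)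
        = (∑ v ∈ Finset.range L, p v * (v : ENNReal)) / (L : ENNReal) := by
      rw [show (∑ v ∈ Finset.range L, p v * (v : ENNReal)) / (L : ENNReal)
          = ∑ v ∈ Finset.range L, p v * (v : ENNReal) / (L : ENNReal) by
        simp [ENNReal.div_eq_inv_mul, Finset.mul_sum]]
      refine Finset.sum_congr rfl fun v hv => ?_
      simp only [Finset.mem_range] at hv
      rw [min_eq_left hv.le, mul_div_assoc]
    rw [hlhs, hrhs]
    have hcancel : ∑ v ∈ Finset.Ico k L, p v
        = (∑ v ∈ Finset.Ico k L, p v) * (L : ENNReal) / (L : ENNReal) := by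
      rw [mul_div_assoc, ENNReal.div_self hLne hLnt, mul_one]
    rw [hcancel]
    apply ENNReal.div_le_div_right
    have hsplit : (∑ v ∈ Finset.Ico k L, p v) * (L : ENNReal)
        = ∑ v ∈ Finset.Ico k L, (p v * (v : ENNReal) + p v * ((L - v : ℕ) : ENNReal)) := by
      rw [Finset.sum_mul]
      refine Finset.sum_congr rfl fun v hv => ?_
      simp only [Finset.mem_Ico] at hv
      rw [← mul_add]
      congr 1
      rw [← Nat.cast_add, Nat.add_sub_cancel' hv.2.le]
    rw [hsplit, Finset.sum_add_distrib]
    have htail : ∑ v ∈ Finset.Ico k L, p v * ((L - v : ℕ) : ENNReal)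
        ≤ ∑ v ∈ Finset.range k, p v * (v : ENNReal) := by
      calc ∑ v ∈ Finset.Ico k L, p v * ((L - v : ℕ) : ENNReal)
          = ∑ v ∈ Finset.Ico k L, ((L - v : ℕ) : ENNReal) * p v :=
            Finset.sum_congr rfl fun v _ => mul_comm _ _
        _ ≤ ∑ v ∈ Finset.range k, (v : ENNReal) * p v := key
        _ = ∑ v ∈ Finset.range k, p v * (v : ENNReal) :=
            Finset.sum_congr rfl fun v _ => mul_comm _ _
    calc ∑ v ∈ Finset.Ico k L, p v * (v : ENNReal)
          + ∑ v ∈ Finset.Ico k L, p v * ((L - v : ℕ) : ENNReal)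
        ≤ ∑ v ∈ Finset.Ico k L, p v * (v : ENNReal)
          + ∑ v ∈ Finset.range k, p v * (v : ENNReal) := add_le_add_right htail _
      _ = ∑ v ∈ Finset.range L, p v * (v : ENNReal) := by
          rw [add_comm, Finset.range_eq_Ico,
            Finset.sum_Ico_consecutive _ (Nat.zero_le k) (Nat.le_add_right k lam)]
          rw [hLdef, Finset.range_eq_Ico]
  -- put it together
  rw [hLHS, hRHS,
    ← Summable.tsum_add_tsum_compl (s := (↑(Finset.range L) : Set ℕ)) ENNReal.summable ENNReal.summable
      (f := fun v => if k ≤ v then p v else 0),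
    ← Summable.tsum_add_tsum_compl (s := (↑(Finset.range L) : Set ℕ)) ENNReal.summable ENNReal.summable
      (f := fun v => p v * (((min v L : ℕ) : ENNReal) / L))]
  apply add_le_add
  · rw [Finset.tsum_subtype' (Finset.range L) (fun v => if k ≤ v then p v else 0),
      Finset.tsum_subtype' (Finset.range L) (fun v => p v * (((min v L : ℕ) : ENNReal) / L))]
    exact hfin
  · apply le_of_eq
    refine tsum_congr fun v => ?_
    obtain ⟨v, hv⟩ := v
    have hvL : L ≤ v := by
      simpa [Finset.mem_coe, Finset.mem_range, not_lt] using hv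
    rw [if_pos (le_trans (Nat.le_add_right k lam) hvL), min_eq_right hvL,
      ENNReal.div_self hLne hLnt, mul_one]
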